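/- Upper bound for χ_l(K_n, c): Let c ≥ 1, q ≥ 1 and n ≥ 1 be integers with c(c+1)·n ≤ (c+1)q² + (c+3)q − 2(c−1). Then for every list assignment L : Fin n → Finset ℕ with |L(v)| = q + 1 for every vertex v and |L(u) ∩ L(v)| ≤ c for all distinct vertices u ≠ v, there exists an injective function f : Fin n → ℕ with f(v) ∈ L(v) for every v. In other words, χ_l(K_n, c) ≤ q + 1 whenever c(c+1)·n ≤ (c+1)q² + (c+3)q − 2(c−1). -/

import Mathlib

open Finset

lemma sum_card_filter_eq {ι : Type*} [DecidableEq ι] (T : Finset ι) (B : ι → Finset ℕ) :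
    ∑ y ∈ T.biUnion B, (T.filter (fun v => y ∈ B v)).card = ∑ v ∈ T, (B v).card := by
  simp_rw [Finset.card_filter]
  rw [Finset.sum_comm]
  refine Finset.sum_congr rfl fun v hv => ?_
  rw [← Finset.card_filter, Finset.filter_mem_eq_inter,
    Finset.inter_eq_right.2 (Finset.subset_biUnion_of_mem B hv)]

lemma sum_sq_card_filter {ι : Type*} [DecidableEq ι] (T : Finset ι) (B : ι → Finset ℕ) :
    ∑ y ∈ T.biUnion B, ((T.filter (fun v => y ∈ B v)).card) ^ 2
      = ∑ v ∈ T, ∑ u ∈ T, (B v ∩ B u).card := by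
  simp_rw [Finset.card_filter, sq, Finset.sum_mul_sum]
  rw [Finset.sum_comm]
  refine Finset.sum_congr rfl fun v hv => ?_
  rw [Finset.sum_comm]
  refine Finset.sum_congr rfl fun u hu => ?_
  have : ∀ y : ℕ, (if y ∈ B v then (1:ℕ) else 0) * (if y ∈ B u then (1:ℕ) else 0)
      = if y ∈ B v ∩ B u then 1 else 0 := by
    intro y; by_cases h1 : y ∈ B v <;> by_cases h2 : y ∈ B u <;> simp [h1, h2]
  simp_rw [this]
  rw [← Finset.card_filter, Finset.filter_mem_eq_inter, Finset.inter_eq_right.2]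
  exact (Finset.inter_subset_left).trans (Finset.subset_biUnion_of_mem B hv)

/-- Core counting lemma: `q+2` sets of size `q` with pairwise intersections `≤ c-1`
cover many elements. -/
lemma core_union_lb {ι : Type*} [DecidableEq ι] (c q : ℕ) (hc : 1 ≤ c)
    (T : Finset ι) (B : ι → Finset ℕ)
    (hT : T.card = q + 2)
    (hB : ∀ v ∈ T, (B v).card = q)
    (hBint : ∀ u ∈ T, ∀ v ∈ T, u ≠ v → (B u ∩ B v).card + 1 ≤ c) :
    ((q : ℤ) + 2) * ((c + 1) * q - (c - 1)) ≤ (c * (c + 1)) * (T.biUnion B).card := by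
  classical
  set W := T.biUnion B with hW
  set e : ℕ → ℕ := fun y => (T.filter (fun v => y ∈ B v)).card with he
  have h1 : ∑ y ∈ W, e y = (q + 2) * q := by
    rw [he, hW, sum_card_filter_eq]
    rw [Finset.sum_congr rfl hB, Finset.sum_const, hT, smul_eq_mul]
  have h2 : ∑ y ∈ W, (e y) ^ 2 ≤ (q + 2) * q + (q + 2) * ((q + 1) * (c - 1)) := by
    rw [he, hW, sum_sq_card_filter]
    have hrow : ∀ v ∈ T, ∑ u ∈ T, (B v ∩ B u).card ≤ q + (q + 1) * (c - 1) := by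
      intro v hv
      rw [← Finset.sum_erase_add _ _ hv]
      have hdiag : (B v ∩ B v).card = q := by rw [Finset.inter_self]; exact hB v hv
      have hoff : ∑ u ∈ T.erase v, (B v ∩ B u).card ≤ (q + 1) * (c - 1) := by
        have : ∀ u ∈ T.erase v, (B v ∩ B u).card ≤ c - 1 := by
          intro u hu
          have huT := Finset.mem_of_mem_erase hu
          have hne : v ≠ u := fun h => (Finset.ne_of_mem_erase hu) h.symm
          have := hBint v hv u huT hne
          omega
        calc ∑ u ∈ T.erase v, (B v ∩ B u).card ≤ ∑ u ∈ T.erase v, (c - 1) :=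
              Finset.sum_le_sum this
          _ = (q + 1) * (c - 1) := by
              rw [Finset.sum_const, Finset.card_erase_of_mem hv, hT, smul_eq_mul]
              norm_num
      omega
    calc ∑ v ∈ T, ∑ u ∈ T, (B v ∩ B u).card ≤ ∑ v ∈ T, (q + (q + 1) * (c - 1)) :=
          Finset.sum_le_sum hrow
      _ = (q + 2) * (q + (q + 1) * (c - 1)) := by rw [Finset.sum_const, hT, smul_eq_mul]
      _ = (q + 2) * q + (q + 2) * ((q + 1) * (c - 1)) := by ring
  -- pointwise bound
  have h3 : ∀ y ∈ W, (2 * c + 1) * (e y : ℤ) - (e y : ℤ) ^ 2 ≤ c * (c + 1) := by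
    intro y _
    set a : ℤ := (e y : ℤ) with ha
    have key : (a - c) * (a - (c + 1)) ≥ 0 := by
      rcases le_or_gt a c with h | h
      · have h1 : a - (c:ℤ) ≤ 0 := by omega
        have h2 : a - ((c:ℤ) + 1) ≤ 0 := by omega
        nlinarith
      · have h1 : 0 ≤ a - (c:ℤ) := by omega
        have h2 : 0 ≤ a - ((c:ℤ) + 1) := by omega
        exact mul_nonneg h1 h2
    nlinarith [key]
  -- combine
  have hsum : ∑ y ∈ W, ((2 * c + 1) * (e y : ℤ) - (e y : ℤ) ^ 2)
      ≤ (W.card : ℤ) * (c * (c + 1)) := by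
    calc ∑ y ∈ W, ((2 * c + 1) * (e y : ℤ) - (e y : ℤ) ^ 2)
        ≤ ∑ y ∈ W, ((c : ℤ) * (c + 1)) := Finset.sum_le_sum h3
      _ = (W.card : ℤ) * (c * (c + 1)) := by rw [Finset.sum_const, nsmul_eq_mul]
  have hS1 : ∑ y ∈ W, (e y : ℤ) = ((q : ℤ) + 2) * q := by
    rw [← Nat.cast_sum]; rw [h1]; push_cast; ring
  have hS2 : ∑ y ∈ W, (e y : ℤ) ^ 2
      ≤ ((q : ℤ) + 2) * q + ((q : ℤ) + 2) * ((q + 1) * ((c : ℤ) - 1)) := by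
    have := h2
    have hcast : ((c - 1 : ℕ) : ℤ) = (c : ℤ) - 1 := by
      rw [Nat.cast_sub hc]; norm_num
    calc ∑ y ∈ W, (e y : ℤ) ^ 2 = ((∑ y ∈ W, (e y) ^ 2 : ℕ) : ℤ) := by push_cast; rfl
      _ ≤ (((q + 2) * q + (q + 2) * ((q + 1) * (c - 1)) : ℕ) : ℤ) := by exact_mod_cast this
      _ = ((q : ℤ) + 2) * q + ((q : ℤ) + 2) * ((q + 1) * ((c : ℤ) - 1)) := by
          push_cast [hcast]; ring
  have expand : ∑ y ∈ W, ((2 * c + 1) * (e y : ℤ) - (e y : ℤ) ^ 2)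
      = (2 * c + 1) * (((q : ℤ) + 2) * q) - ∑ y ∈ W, (e y : ℤ) ^ 2 := by
    rw [Finset.sum_sub_distrib, ← Finset.mul_sum, hS1]
  nlinarith [hsum, hS2, expand]

lemma hall_condition (c q n : ℕ)
    (hc : 1 ≤ c) (hq : 1 ≤ q)
    (hcount : (c : ℤ) * (c + 1) * n ≤ (c + 1) * q ^ 2 + (c + 3) * q - 2 * (c - 1))
    (L : Fin n → Finset ℕ)
    (hcard : ∀ v, (L v).card = q + 1)
    (hint : ∀ u v, u ≠ v → ((L u) ∩ (L v)).card ≤ c)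
    (s : Finset (Fin n)) : s.card ≤ (s.biUnion L).card := by
  classical
  by_contra hcon
  push_neg at hcon
  set m := s.card with hm
  set W₀ := s.biUnion L with hW₀
  -- s is nonempty
  have hm1 : 1 ≤ m := by
    rcases Nat.eq_zero_or_pos m with h | h
    · omega
    · exact h
  -- m ≥ q + 2
  have hmq : q + 2 ≤ m := by
    by_contra hsmall
    push_neg at hsmall
    obtain ⟨v, hv⟩ := Finset.card_pos.1 hm1
    have hsub : L v ⊆ W₀ := Finset.subset_biUnion_of_mem L hv
    have := Finset.card_le_card hsub
    rw [hcard v] at this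
    omega
  have hW₀card : W₀.card ≤ m - 1 := by omega
  -- total degree count
  have hdeg : ∑ x ∈ W₀, (s.filter (fun v => x ∈ L v)).card = m * (q + 1) := by
    rw [hW₀, sum_card_filter_eq]
    rw [Finset.sum_congr rfl (fun v _ => hcard v), Finset.sum_const, smul_eq_mul]
  -- there is a color of degree ≥ q + 2
  have hbig : ∃ x ∈ W₀, q + 2 ≤ (s.filter (fun v => x ∈ L v)).card := by
    by_contra hall
    push_neg at hall
    have : ∑ x ∈ W₀, (s.filter (fun v => x ∈ L v)).card ≤ ∑ x ∈ W₀, (q + 1) :=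
      Finset.sum_le_sum (fun x hx => by have := hall x hx; omega)
    rw [Finset.sum_const, smul_eq_mul] at this
    rw [hdeg] at this
    have : m * (q + 1) ≤ (m - 1) * (q + 1) :=
      this.trans (Nat.mul_le_mul_right _ hW₀card)
    have hlt : (m - 1) * (q + 1) < m * (q + 1) :=
      Nat.mul_lt_mul_of_lt_of_le (by omega) (le_refl _) (by omega)
    omega
  obtain ⟨x, hxW, hxdeg⟩ := hbig
  obtain ⟨T, hTsub, hTcard⟩ :=
    Finset.exists_subset_card_eq (s := s.filter (fun v => x ∈ L v)) hxdeg
  set B : Fin n → Finset ℕ := fun v => (L v).erase x with hB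
  have hxmem : ∀ v ∈ T, x ∈ L v := fun v hv => (Finset.mem_filter.1 (hTsub hv)).2
  have hTs : ∀ v ∈ T, v ∈ s := fun v hv => (Finset.mem_filter.1 (hTsub hv)).1
  have hBcard : ∀ v ∈ T, (B v).card = q := by
    intro v hv
    rw [hB]
    rw [Finset.card_erase_of_mem (hxmem v hv), hcard v]
    omega
  have hBint : ∀ u ∈ T, ∀ v ∈ T, u ≠ v → (B u ∩ B v).card + 1 ≤ c := by
    intro u hu v hv huv
    have hx2 : x ∈ L u ∩ L v := Finset.mem_inter.2 ⟨hxmem u hu, hxmem v hv⟩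
    have hxnot : x ∉ B u ∩ B v := by
      intro h
      exact (Finset.notMem_erase x (L u)) (Finset.mem_inter.1 h).1
    have hsub : insert x (B u ∩ B v) ⊆ L u ∩ L v := by
      intro y hy
      rcases Finset.mem_insert.1 hy with rfl | hy
      · exact hx2
      · have h1 := (Finset.mem_inter.1 hy).1
        have h2 := (Finset.mem_inter.1 hy).2
        exact Finset.mem_inter.2 ⟨Finset.erase_subset x (L u) h1,
          Finset.erase_subset x (L v) h2⟩
    have := Finset.card_le_card hsub
    rw [Finset.card_insert_of_notMem hxnot] at this
    exact this.trans (hint u v huv)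
  -- the punctured union is small
  have hWsub : T.biUnion B ⊆ W₀.erase x := by
    intro y hy
    obtain ⟨v, hvT, hyB⟩ := Finset.mem_biUnion.1 hy
    refine Finset.mem_erase.2 ⟨(Finset.mem_erase.1 hyB).1, ?_⟩
    exact Finset.mem_biUnion.2 ⟨v, hTs v hvT, Finset.erase_subset x (L v) hyB⟩
  have hWcard : (T.biUnion B).card ≤ m - 2 := by
    have h1 := Finset.card_le_card hWsub
    rw [Finset.card_erase_of_mem hxW] at h1
    omega
  -- apply the core lemma
  have hcore := core_union_lb c q hc T B hTcard hBcard hBint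
  -- numeric contradiction
  have hmn : m ≤ n := by
    have := Finset.card_le_univ s
    simpa [hm] using this
  have hfact : ((c:ℤ) + 1) * q ^ 2 + ((c:ℤ) + 3) * q - 2 * ((c:ℤ) - 1)
      = ((q : ℤ) + 2) * ((c + 1) * q - (c - 1)) := by ring
  have hcast : ((m - 2 : ℕ) : ℤ) = (m : ℤ) - 2 := by
    have : 2 ≤ m := by omega
    omega
  have hWZ : ((T.biUnion B).card : ℤ) ≤ (m : ℤ) - 2 := by
    rw [← hcast]; exact_mod_cast hWcard
  have hc0 : (0 : ℤ) < c * (c + 1) := by positivity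
  have hchain : (c : ℤ) * (c + 1) * n ≤ (c : ℤ) * (c + 1) * ((m : ℤ) - 2) := by
    calc (c : ℤ) * (c + 1) * n ≤ ((q : ℤ) + 2) * ((c + 1) * q - (c - 1)) := by
          rw [← hfact]; exact hcount
      _ ≤ (c * (c + 1)) * ((T.biUnion B).card : ℤ) := hcore
      _ ≤ (c : ℤ) * (c + 1) * ((m : ℤ) - 2) := by
          exact mul_le_mul_of_nonneg_left hWZ (by positivity)
  have hmnZ : (m : ℤ) ≤ (n : ℤ) := by exact_mod_cast hmn
  nlinarith [hchain, hmnZ, hc0]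



/-- Upper bound for `χ_l(K_n, c)`: if `c(c+1)·n ≤ (c+1)q² + (c+3)q − 2(c−1)`,
then `K_n` can be properly colored from every `(q+1, c)`-list assignment,
i.e. `χ_l(K_n, c) ≤ q + 1`. -/
theorem chi_list_upper_bound (c q n : ℕ)
    (hc : 1 ≤ c) (hq : 1 ≤ q) (hn : 1 ≤ n)
    (hcount : (c : ℤ) * (c + 1) * n ≤ (c + 1) * q ^ 2 + (c + 3) * q - 2 * (c - 1))
    (L : Fin n → Finset ℕ)
    (hcard : ∀ v, (L v).card = q + 1)
    (hint : ∀ u v, u ≠ v → ((L u) ∩ (L v)).card ≤ c) :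
    ∃ f : Fin n → ℕ, Function.Injective f ∧ ∀ v, f v ∈ L v := by
  exact (Finset.all_card_le_biUnion_card_iff_exists_injective L).1
    (hall_condition c q n hc hq hcount L hcard hint)
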